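/- Let $g \in C^6[0,X]$, $\Delta x > 0$, and $x_i \in [\Delta x, X-\Delta x]$. Define the averaging operator $\mathcal A h = h + \frac{\Delta x^2}{12}\delta_x^2 h$ and the centered second difference $\delta_x^2 h(x_i) = \frac{h(x_i+\Delta x)-2h(x_i)+h(x_i-\Delta x)}{\Delta x^2}$. Then $\mathcal A g''(x_i) = \delta_x^2 g(x_i) + \frac{\Delta x^4}{360}\int_0^1 \big(g^{(6)}(x_i-\eta\Delta x) + g^{(6)}(x_i+\eta\Delta x)\big)\,\xi(\eta)\,d\eta$, where $\xi(\eta) = (1-\eta)^3\big(5-3(1-\eta)^2\big)$. -/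

import Mathlib

theorem compact_difference_remainder (X : ℝ) (hX : 0 < X)
    (g : ℝ → ℝ) (hg : ContDiffOn ℝ 6 g (Set.Icc 0 X))
    (dx : ℝ) (hdx : 0 < dx) (x : ℝ) (hx : x ∈ Set.Icc dx (X - dx))
    (δ2 : (ℝ → ℝ) → ℝ → ℝ)
    (hδ2 : ∀ h y, δ2 h y = (h (y + dx) - 2 * h y + h (y - dx)) / dx ^ 2)
    (A : (ℝ → ℝ) → ℝ → ℝ)
    (hA : ∀ h y, A h y = h y + dx ^ 2 / 12 * δ2 h y)
    (g2 g6 : ℝ → ℝ)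
    (hg2 : g2 = iteratedDerivWithin 2 g (Set.Icc 0 X))
    (hg6 : g6 = iteratedDerivWithin 6 g (Set.Icc 0 X)) :
    A g2 x = δ2 g x +
      dx ^ 4 / 360 *
        ∫ η in (0 : ℝ)..1,
          (g6 (x - η * dx) + g6 (x + η * dx)) * ((1 - η) ^ 3 * (5 - 3 * (1 - η) ^ 2)) := by
  obtain ⟨hxl, hxr⟩ := hx
  have hI : UniqueDiffOn ℝ (Set.Icc (0:ℝ) X) := uniqueDiffOn_Icc hX
  set G : ℕ → ℝ → ℝ := fun k => iteratedDerivWithin k g (Set.Icc 0 X) with hG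
  have hmemp : ∀ η ∈ Set.Icc (0:ℝ) 1, x + η * dx ∈ Set.Icc (0:ℝ) X := by
    rintro η ⟨h1, h2⟩; constructor <;> nlinarith
  have hmemm : ∀ η ∈ Set.Icc (0:ℝ) 1, x - η * dx ∈ Set.Icc (0:ℝ) X := by
    rintro η ⟨h1, h2⟩; constructor <;> nlinarith
  have hmempo : ∀ η ∈ Set.Ioo (0:ℝ) 1, x + η * dx ∈ Set.Ioo (0:ℝ) X := by
    rintro η ⟨h1, h2⟩; constructor <;> nlinarith
  have hmemmo : ∀ η ∈ Set.Ioo (0:ℝ) 1, x - η * dx ∈ Set.Ioo (0:ℝ) X := by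
    rintro η ⟨h1, h2⟩; constructor <;> nlinarith
  have hGc : ∀ k : ℕ, k ≤ 6 → ContinuousOn (G k) (Set.Icc 0 X) := by
    intro k hk
    exact hg.continuousOn_iteratedDerivWithin (by exact_mod_cast hk) hI
  have hGd : ∀ k : ℕ, k < 6 → ∀ y ∈ Set.Ioo (0:ℝ) X, HasDerivAt (G k) (G (k+1) y) y := by
    intro k hk y hy
    have hyI : y ∈ Set.Icc (0:ℝ) X := Set.Ioo_subset_Icc_self hy
    have hd : DifferentiableOn ℝ (G k) (Set.Icc 0 X) :=
      hg.differentiableOn_iteratedDerivWithin (by exact_mod_cast hk) hI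
    have h1 : HasDerivWithinAt (G k) (derivWithin (G k) (Set.Icc 0 X) y) (Set.Icc 0 X) y :=
      (hd y hyI).hasDerivWithinAt
    have h2 : derivWithin (G k) (Set.Icc 0 X) y = G (k+1) y :=
      (congrFun iteratedDerivWithin_succ y).symm
    rw [h2] at h1
    exact h1.hasDerivAt (Icc_mem_nhds hy.1 hy.2)
  set Φ : ℕ → ℝ → ℝ := fun k η => dx ^ k * (G k (x + η * dx) + (-1:ℝ) ^ k * G k (x - η * dx))
    with hΦ
  have hΦd : ∀ k : ℕ, k < 6 → ∀ η ∈ Set.Ioo (0:ℝ) 1, HasDerivAt (Φ k) (Φ (k+1) η) η := by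
    intro k hk η hη
    have hp : HasDerivAt (fun η : ℝ => x + η * dx) dx η := by
      simpa using ((hasDerivAt_id η).mul_const dx).const_add x
    have hm : HasDerivAt (fun η : ℝ => x - η * dx) (-dx) η := by
      simpa using ((hasDerivAt_id η).mul_const dx).const_sub x
    have h1 : HasDerivAt (fun η : ℝ => G k (x + η * dx)) (G (k+1) (x + η * dx) * dx) η :=
      by have := (hGd k hk _ (hmempo η hη)).comp η hp; exact this
    have h2 : HasDerivAt (fun η : ℝ => G k (x - η * dx)) (G (k+1) (x - η * dx) * (-dx)) η :=
      by have := (hGd k hk _ (hmemmo η hη)).comp η hm; exact this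
    have := ((h1.add (h2.const_mul ((-1:ℝ) ^ k))).const_mul (dx ^ k))
    refine this.congr_deriv ?_
    ring
  have hΦc : ∀ k : ℕ, k ≤ 6 → ContinuousOn (Φ k) (Set.Icc 0 1) := by
    intro k hk
    have c1 : ContinuousOn (fun η : ℝ => G k (x + η * dx)) (Set.Icc 0 1) :=
      (hGc k hk).comp (Continuous.continuousOn
        (continuous_const.add (continuous_id.mul continuous_const))) hmemp
    have c2 : ContinuousOn (fun η : ℝ => G k (x - η * dx)) (Set.Icc 0 1) :=
      (hGc k hk).comp (Continuous.continuousOn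
        (continuous_const.sub (continuous_id.mul continuous_const))) hmemm
    exact continuousOn_const.mul (c1.add (continuousOn_const.mul c2))
  set H : ℝ → ℝ := fun η =>
      Φ 5 η * (5*(1-η)^3 - 3*(1-η)^5)
    - Φ 4 η * (-15*(1-η)^2 + 15*(1-η)^4)
    + Φ 3 η * (30*(1-η) - 60*(1-η)^3)
    - Φ 2 η * (-30 + 180*(1-η)^2)
    + Φ 1 η * (-360*(1-η))
    - Φ 0 η * 360 with hH
  have hξ : ∀ (n : ℕ) (η : ℝ), HasDerivAt (fun η : ℝ => (1-η)^n)
      ((n:ℝ) * (1-η)^(n-1) * (-1)) η := by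
    intro n η
    exact ((hasDerivAt_id η).const_sub 1).pow n
  have hHd : ∀ η ∈ Set.Ioo (0:ℝ) 1, HasDerivAt H
      (Φ 6 η * ((1-η)^3 * (5 - 3*(1-η)^2))) η := by
    intro η hη
    have d5 := hΦd 5 (by norm_num) η hη
    have d4 := hΦd 4 (by norm_num) η hη
    have d3 := hΦd 3 (by norm_num) η hη
    have d2 := hΦd 2 (by norm_num) η hη
    have d1 := hΦd 1 (by norm_num) η hη
    have d0 := hΦd 0 (by norm_num) η hη
    simp only [show (5:ℕ)+1 = 6 from rfl, show (4:ℕ)+1 = 5 from rfl, show (3:ℕ)+1 = 4 from rfl,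
      show (2:ℕ)+1 = 3 from rfl, show (1:ℕ)+1 = 2 from rfl, show (0:ℕ)+1 = 1 from rfl]
      at d5 d4 d3 d2 d1 d0
    have u : HasDerivAt (fun η : ℝ => 1 - η) (-1) η := (hasDerivAt_id η).const_sub 1
    have e2 : HasDerivAt (fun η : ℝ => (1-η)^2) ((2:ℕ) * (1-η)^(2-1) * (-1)) η := u.pow 2
    have e3 : HasDerivAt (fun η : ℝ => (1-η)^3) ((3:ℕ) * (1-η)^(3-1) * (-1)) η := u.pow 3
    have e4 : HasDerivAt (fun η : ℝ => (1-η)^4) ((4:ℕ) * (1-η)^(4-1) * (-1)) η := u.pow 4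
    have e5 : HasDerivAt (fun η : ℝ => (1-η)^5) ((5:ℕ) * (1-η)^(5-1) * (-1)) η := u.pow 5
    have D0 : HasDerivAt (fun η : ℝ => 5*(1-η)^3 - 3*(1-η)^5)
        (-15*(1-η)^2 + 15*(1-η)^4) η := by
      refine ((e3.const_mul 5).sub (e5.const_mul 3)).congr_deriv ?_
      push_cast; ring
    have D1 : HasDerivAt (fun η : ℝ => -15*(1-η)^2 + 15*(1-η)^4)
        (30*(1-η) - 60*(1-η)^3) η := by
      refine ((e2.const_mul (-15)).add (e4.const_mul 15)).congr_deriv ?_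
      push_cast; ring
    have D2 : HasDerivAt (fun η : ℝ => 30*(1-η) - 60*(1-η)^3)
        (-30 + 180*(1-η)^2) η := by
      refine ((u.const_mul 30).sub (e3.const_mul 60)).congr_deriv ?_
      push_cast; ring
    have D3 : HasDerivAt (fun η : ℝ => -30 + 180*(1-η)^2) (-360*(1-η)) η := by
      refine ((hasDerivAt_const η (-30:ℝ)).add (e2.const_mul 180)).congr_deriv ?_
      push_cast; ring
    have D4 : HasDerivAt (fun η : ℝ => -360*(1-η)) (360:ℝ) η := by
      refine (u.const_mul (-360)).congr_deriv ?_
      ring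
    have total := (((((d5.mul D0).sub (d4.mul D1)).add (d3.mul D2)).sub
        (d2.mul D3)).add (d1.mul D4)).sub (d0.mul_const 360)
    refine total.congr_deriv ?_
    ring
  have hHc : ContinuousOn H (Set.Icc 0 1) := by
    have u : Continuous (fun η : ℝ => 1 - η) := continuous_const.sub continuous_id
    have p : ∀ c : ℝ, ∀ n : ℕ, ContinuousOn (fun η : ℝ => c * (1-η)^n) (Set.Icc 0 1) :=
      fun c n => Continuous.continuousOn (continuous_const.mul (u.pow n))
    have q : ∀ c : ℝ, ContinuousOn (fun η : ℝ => c * (1-η)) (Set.Icc 0 1) :=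
      fun c => Continuous.continuousOn (continuous_const.mul u)
    exact (((((((hΦc 5 (by norm_num)).mul ((p 5 3).sub (p 3 5))).sub
      ((hΦc 4 (by norm_num)).mul ((p (-15) 2).add (p 15 4)))).add
      ((hΦc 3 (by norm_num)).mul ((q 30).sub (p 60 3)))).sub
      ((hΦc 2 (by norm_num)).mul (continuousOn_const.add (p 180 2)))).add
      ((hΦc 1 (by norm_num)).mul (q (-360)))).sub
      ((hΦc 0 (by norm_num)).mul continuousOn_const))
  have hξc : ContinuousOn (fun η : ℝ => (1-η)^3 * (5 - 3*(1-η)^2)) (Set.Icc 0 1) :=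
    Continuous.continuousOn (((continuous_const.sub continuous_id).pow 3).mul
      (continuous_const.sub (continuous_const.mul ((continuous_const.sub continuous_id).pow 2))))
  have hint : IntervalIntegrable (fun η => Φ 6 η * ((1-η)^3 * (5 - 3*(1-η)^2)))
      MeasureTheory.volume 0 1 := by
    apply ContinuousOn.intervalIntegrable
    rw [Set.uIcc_of_le (by norm_num : (0:ℝ) ≤ 1)]
    exact (hΦc 6 le_rfl).mul hξc
  have key : (∫ η in (0:ℝ)..1, Φ 6 η * ((1-η)^3 * (5 - 3*(1-η)^2))) = H 1 - H 0 :=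
    intervalIntegral.integral_eq_sub_of_hasDeriv_right_of_le (by norm_num) hHc
      (fun η hη => (hHd η hη).hasDerivWithinAt) hint
  have hcongr : (∫ η in (0:ℝ)..1,
        (g6 (x - η * dx) + g6 (x + η * dx)) * ((1 - η) ^ 3 * (5 - 3 * (1 - η) ^ 2)))
      = (1/dx^6) * ∫ η in (0:ℝ)..1, Φ 6 η * ((1-η)^3 * (5 - 3*(1-η)^2)) := by
    rw [← intervalIntegral.integral_const_mul]
    apply intervalIntegral.integral_congr
    intro η hη
    have hdx6 : dx ^ 6 ≠ 0 := pow_ne_zero _ (ne_of_gt hdx)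
    simp only [hΦ, hg6, hG]
    field_simp
    ring
  rw [hA, hδ2, hδ2, hcongr, key]
  have hΦ0 : ∀ η : ℝ, Φ 0 η = g (x + η * dx) + g (x - η * dx) := by
    intro η; simp [hΦ, hG, iteratedDerivWithin_zero]
  have hΦ2 : ∀ η : ℝ, Φ 2 η = dx^2 * (g2 (x + η * dx) + g2 (x - η * dx)) := by
    intro η; simp [hΦ, hG, hg2]
  have h1 : Φ 1 0 = 0 := by norm_num [hΦ]
  have h3 : Φ 3 0 = 0 := by norm_num [hΦ]
  have h5 : Φ 5 0 = 0 := by norm_num [hΦ]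
  have hdxne : dx ≠ 0 := ne_of_gt hdx
  simp only [hH, hΦ0, hΦ2, h1, h3, h5]
  norm_num
  field_simp
  ring
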